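/- If f is an allocation mechanism such that for every valuation profile V there exists a permutation π with f(V) = RR_π(V), then f is an EF1 mechanism. -/
import Mathlib


open Finset

/-- Tie-breaking argmax: the smallest index in `C` attaining the maximum of `v` on `C`. -/
noncomputable def pickTB (v : ℕ → ℝ) (C : Finset ℕ) : ℕ :=
  if h : (C.filter fun j => ∀ j' ∈ C, v j' ≤ v j).Nonempty
  then (C.filter fun j => ∀ j' ∈ C, v j' ≤ v j).min' h
  else 0

/-- Remaining goods before turn `t` of round robin; at turn `t` agent `t % n` picks. -/
noncomputable def rrRem (v : ℕ → ℕ → ℝ) (n m : ℕ) : ℕ → Finset ℕ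
  | 0 => Finset.range m
  | t + 1 => (rrRem v n m t).erase (pickTB (v (t % n)) (rrRem v n m t))

/-- The good picked at turn `t` of round robin. -/
noncomputable def rrPickAt (v : ℕ → ℕ → ℝ) (n m t : ℕ) : ℕ :=
  pickTB (v (t % n)) (rrRem v n m t)

/-- The bundle allocated to agent `i` by round robin. -/
noncomputable def rrBundle (v : ℕ → ℕ → ℝ) (n m i : ℕ) : Finset ℕ :=
  ((Finset.range m).filter fun t => t % n = i).image (rrPickAt v n m)

/-- Additive valuation of a bundle. -/
noncomputable def bundleValue (vi : ℕ → ℝ) (S : Finset ℕ) : ℝ := ∑ j ∈ S, vi j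

/-- Bundle of agent `i` under round robin induced by the permutation `π`. -/
noncomputable def rrPerm (v : ℕ → ℕ → ℝ) (n m : ℕ) (π : Equiv.Perm ℕ) (i : ℕ) :
    Finset ℕ :=
  rrBundle (fun i' => v (π.symm i')) n m (π i)

lemma pickTB_spec (v : ℕ → ℝ) (C : Finset ℕ) (hC : C.Nonempty) :
    pickTB v C ∈ C ∧ ∀ j ∈ C, v j ≤ v (pickTB v C) := by
  obtain ⟨b, hb, hmax⟩ := Finset.exists_max_image C v hC
  have hne : (C.filter fun j => ∀ j' ∈ C, v j' ≤ v j).Nonempty :=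
    ⟨b, Finset.mem_filter.2 ⟨hb, hmax⟩⟩
  rw [pickTB, dif_pos hne]
  have h := Finset.min'_mem _ hne
  rw [Finset.mem_filter] at h
  exact h

lemma rrRem_subset (v : ℕ → ℕ → ℝ) (n m : ℕ) {t s : ℕ} (h : t ≤ s) :
    rrRem v n m s ⊆ rrRem v n m t := by
  induction s, h using Nat.le_induction with
  | base => exact subset_rfl
  | succ s hs ih => exact Finset.Subset.trans (Finset.erase_subset _ _) ih

lemma card_rrRem (v : ℕ → ℕ → ℝ) (n m : ℕ) {t : ℕ} (h : t ≤ m) :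
    (rrRem v n m t).card = m - t := by
  induction t with
  | zero => simp [rrRem]
  | succ t ih =>
    have h1 := ih (Nat.le_of_succ_le h)
    have hne : (rrRem v n m t).Nonempty := Finset.card_pos.1 (by omega)
    have hmem := (pickTB_spec (v (t % n)) _ hne).1
    rw [rrRem, Finset.card_erase_of_mem hmem, h1]; omega

lemma rrRem_nonempty (v : ℕ → ℕ → ℝ) (n m : ℕ) {t : ℕ} (h : t < m) :
    (rrRem v n m t).Nonempty := by
  apply Finset.card_pos.1
  rw [card_rrRem v n m h.le]; omega

lemma rrPickAt_mem (v : ℕ → ℕ → ℝ) (n m : ℕ) {t : ℕ} (h : t < m) :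
    rrPickAt v n m t ∈ rrRem v n m t :=
  (pickTB_spec _ _ (rrRem_nonempty v n m h)).1

lemma rrPickAt_ne (v : ℕ → ℕ → ℝ) (n m : ℕ) {t s : ℕ} (ht : t < m) (hs : s < m)
    (h : t ≠ s) : rrPickAt v n m t ≠ rrPickAt v n m s := by
  have key : ∀ t s : ℕ, t < s → s < m → rrPickAt v n m t ≠ rrPickAt v n m s := by
    intro t s hts hsm he
    have h1 : rrPickAt v n m s ∈ rrRem v n m (t + 1) :=
      rrRem_subset v n m hts (rrPickAt_mem v n m hsm)
    rw [← he] at h1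
    have h2 : rrRem v n m (t + 1) =
        (rrRem v n m t).erase (rrPickAt v n m t) := rfl
    rw [h2] at h1
    exact (Finset.notMem_erase _ _) h1
  rcases h.lt_or_gt with h' | h'
  · exact key t s h' hs
  · exact (key s t h' ht).symm

lemma rrPickAt_le (v : ℕ → ℕ → ℝ) (n m : ℕ) {a t s : ℕ} (hta : t % n = a)
    (hts : t < s) (hs : s < m) :
    v a (rrPickAt v n m s) ≤ v a (rrPickAt v n m t) := by
  have ht : t < m := lt_trans hts hs
  have h1 : rrPickAt v n m s ∈ rrRem v n m t :=
    rrRem_subset v n m hts.le (rrPickAt_mem v n m hs)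
  have h2 := (pickTB_spec (v (t % n)) _ (rrRem_nonempty v n m ht)).2 _ h1
  rw [hta] at h2
  have h3 : rrPickAt v n m t = pickTB (v a) (rrRem v n m t) := by rw [rrPickAt, hta]
  rw [h3]
  exact h2

lemma sum_map_le (s t : Finset ℕ) (φ : ℕ → ℕ) (g h : ℕ → ℝ)
    (hmem : ∀ x ∈ s, φ x ∈ t)
    (hinj : ∀ x ∈ s, ∀ y ∈ s, φ x = φ y → x = y)
    (hle : ∀ x ∈ s, g x ≤ h (φ x))
    (hnn : ∀ y ∈ t, 0 ≤ h y) :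
    ∑ x ∈ s, g x ≤ ∑ y ∈ t, h y :=
  calc ∑ x ∈ s, g x ≤ ∑ x ∈ s, h (φ x) := Finset.sum_le_sum hle
    _ = ∑ y ∈ s.image φ, h y := (Finset.sum_image hinj).symm
    _ ≤ ∑ y ∈ t, h y := Finset.sum_le_sum_of_subset_of_nonneg
        (Finset.image_subset_iff.2 hmem) (fun y hy _ => hnn y hy)

lemma bundleValue_rrBundle (v : ℕ → ℕ → ℝ) (n m i : ℕ) (w : ℕ → ℝ) :
    bundleValue w (rrBundle v n m i) =
      ∑ t ∈ (Finset.range m).filter (fun t => t % n = i), w (rrPickAt v n m t) := by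
  rw [bundleValue, rrBundle]
  apply Finset.sum_image
  intro x hx y hy hxy
  by_contra hne
  exact rrPickAt_ne v n m (Finset.mem_range.1 (Finset.mem_filter.1 hx).1)
    (Finset.mem_range.1 (Finset.mem_filter.1 hy).1) hne hxy

lemma rr_ef1 (v : ℕ → ℕ → ℝ) (hv : ∀ i j, 0 ≤ v i j) (n m a b : ℕ)
    (ha : a < n) (hb : b < n) :
    bundleValue (v a) (rrBundle v n m a) ≥ bundleValue (v a) (rrBundle v n m b) ∨
      ∃ o ∈ rrBundle v n m b,
        bundleValue (v a) (rrBundle v n m a) ≥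
          bundleValue (v a) ((rrBundle v n m b).erase o) := by
  set Ta := (Finset.range m).filter (fun t => t % n = a) with hTa
  set Tb := (Finset.range m).filter (fun t => t % n = b) with hTb
  have memTb : ∀ t ∈ Tb, t < m ∧ t % n = b := by
    intro t ht
    have h := Finset.mem_filter.1 ht
    exact ⟨Finset.mem_range.1 h.1, h.2⟩
  have hBa := bundleValue_rrBundle v n m a (v a)
  have hBb := bundleValue_rrBundle v n m b (v a)
  rw [← hTa] at hBa
  rw [← hTb] at hBb
  rcases lt_trichotomy a b with hab | hab | hab
  · -- a picks before b each round: full envy-freeness of a towards b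
    left
    have hfacts : ∀ t ∈ Tb, b ≤ t ∧ t < m ∧ (t - b + a) % n = a ∧ t - b + a < t := by
      intro t ht
      obtain ⟨htm, htb⟩ := memTb t ht
      have hq : n * (t / n) + t % n = t := Nat.div_add_mod t n
      rw [htb] at hq
      have he : t - b + a = a + n * (t / n) := by omega
      refine ⟨by omega, htm, ?_, by omega⟩
      rw [he, Nat.add_mul_mod_self_left, Nat.mod_eq_of_lt ha]
    rw [ge_iff_le, hBa, hBb]
    apply sum_map_le Tb Ta (fun t => t - b + a)
    · intro t ht
      obtain ⟨h1, h2, h3, h4⟩ := hfacts t ht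
      exact Finset.mem_filter.2 ⟨Finset.mem_range.2 (by omega), h3⟩
    · intro x hx y hy hxy
      have h1 := (hfacts x hx).1
      have h2 := (hfacts y hy).1
      omega
    · intro t ht
      obtain ⟨h1, h2, h3, h4⟩ := hfacts t ht
      exact rrPickAt_le v n m h3 h4 h2
    · intro y _
      exact hv a _
  · left
    rw [hab]
  · -- b picks before a: remove b's first pick
    by_cases hne : Tb.Nonempty
    · right
      obtain ⟨t0, ht0⟩ := hne
      obtain ⟨ht0m, ht0b⟩ := memTb t0 ht0
      have hble : b ≤ t0 := by
        have := Nat.mod_le t0 n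
        omega
      have hbm : b < m := lt_of_le_of_lt hble ht0m
      have hbTb : b ∈ Tb :=
        Finset.mem_filter.2 ⟨Finset.mem_range.2 hbm, Nat.mod_eq_of_lt hb⟩
      refine ⟨rrPickAt v n m b, Finset.mem_image.2 ⟨b, hbTb, rfl⟩, ?_⟩
      have himg : (rrBundle v n m b).erase (rrPickAt v n m b) =
          (Tb.erase b).image (rrPickAt v n m) := by
        ext x
        simp only [Finset.mem_erase, rrBundle, Finset.mem_image, ← hTb]
        constructor
        · rintro ⟨hxo, t, htTb, rfl⟩
          refine ⟨t, ⟨?_, htTb⟩, rfl⟩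
          rintro rfl
          exact hxo rfl
        · rintro ⟨t, ⟨htb', htTb⟩, rfl⟩
          exact ⟨rrPickAt_ne v n m (memTb t htTb).1 hbm htb', t, htTb, rfl⟩
      have hfacts : ∀ t ∈ Tb.erase b,
          n + b ≤ t ∧ t < m ∧ (t - n - b + a) % n = a ∧ t - n - b + a < t := by
        intro t ht
        obtain ⟨htb', htTb⟩ := Finset.mem_erase.1 ht
        obtain ⟨htm, htb⟩ := memTb t htTb
        have hq : n * (t / n) + t % n = t := Nat.div_add_mod t n
        rw [htb] at hq
        have hq1 : 1 ≤ t / n := by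
          rcases Nat.eq_zero_or_pos (t / n) with h0 | h0
          · rw [h0, Nat.mul_zero] at hq
            omega
          · exact h0
        obtain ⟨q', hq'⟩ : ∃ q', t / n = q' + 1 := ⟨t / n - 1, by omega⟩
        rw [hq', Nat.mul_add, Nat.mul_one] at hq
        have he : t - n - b + a = a + n * q' := by omega
        refine ⟨by omega, htm, ?_, by omega⟩
        rw [he, Nat.add_mul_mod_self_left, Nat.mod_eq_of_lt ha]
      have hEb : bundleValue (v a) ((Tb.erase b).image (rrPickAt v n m)) =
          ∑ t ∈ Tb.erase b, v a (rrPickAt v n m t) := by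
        rw [bundleValue]
        apply Finset.sum_image
        intro x hx y hy hxy
        by_contra hne'
        exact rrPickAt_ne v n m (memTb x (Finset.mem_of_mem_erase hx)).1
          (memTb y (Finset.mem_of_mem_erase hy)).1 hne' hxy
      rw [ge_iff_le, himg, hEb, hBa]
      apply sum_map_le (Tb.erase b) Ta (fun t => t - n - b + a)
      · intro t ht
        obtain ⟨h1, h2, h3, h4⟩ := hfacts t ht
        exact Finset.mem_filter.2 ⟨Finset.mem_range.2 (by omega), h3⟩
      · intro x hx y hy hxy
        have h1 := (hfacts x hx).1
        have h2 := (hfacts y hy).1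
        omega
      · intro t ht
        obtain ⟨h1, h2, h3, h4⟩ := hfacts t ht
        exact rrPickAt_le v n m h3 h4 h2
      · intro y _
        exact hv a _
    · left
      rw [ge_iff_le, hBa, hBb, Finset.not_nonempty_iff_eq_empty.1 hne,
        Finset.sum_empty]
      exact Finset.sum_nonneg fun t _ => hv a _

/-- if an allocation mechanism `f` agrees on every (additive, nonnegative)
valuation profile with `RR_π` for some permutation `π` of the agents, then `f` is an
EF1 mechanism: it outputs an EF1 allocation on every input. -/
theorem ef1_of_pointwise_rrPerm (n m : ℕ)
    (f : (ℕ → ℕ → ℝ) → ℕ → Finset ℕ)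
    (hf : ∀ v : ℕ → ℕ → ℝ, (∀ i j, 0 ≤ v i j) →
      ∃ π : Equiv.Perm ℕ, (∀ i, i < n ↔ π i < n) ∧
        ∀ i, i < n → f v i = rrPerm v n m π i) :
    ∀ v : ℕ → ℕ → ℝ, (∀ i j, 0 ≤ v i j) →
      ∀ i, i < n → ∀ j, j < n →
        bundleValue (v i) (f v i) ≥ bundleValue (v i) (f v j) ∨
          ∃ o ∈ f v j,
            bundleValue (v i) (f v i) ≥ bundleValue (v i) ((f v j).erase o) := by
  intro v hv i hi j hj
  obtain ⟨π, hπ, hfv⟩ := hf v hv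
  rw [hfv i hi, hfv j hj]
  unfold rrPerm
  have h := rr_ef1 (fun i' => v (π.symm i')) (fun i' j' => hv _ _) n m (π i) (π j)
    ((hπ i).1 hi) ((hπ j).1 hj)
  simpa using h
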